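/- Let X be a Banach space, (x_n) a sequence in X, and I an ideal on ℕ with the Baire property. Suppose there exists t' ∈ {0,1}^ℕ such that the partial sums (∑_{i=1}^n t'(i) x_i)_n are unbounded. Then the set A(I) = {t ∈ {0,1}^ℕ : (∑_{i=1}^n t(i)x_i)_n is I-bounded} is meager in {0,1}^ℕ. (No assumption on liminf ‖x_n‖ is needed.) -/

import Mathlib

open Filter Topology

section CantorHelpers

lemma exists_cyl_subset {U : Set (ℕ → Bool)} (hU : IsOpen U) {t0 : ℕ → Bool} (h : t0 ∈ U) :
    ∃ p : ℕ, ∀ t : ℕ → Bool, (∀ i < p, t i = t0 i) → t ∈ U := by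
  rw [isOpen_pi_iff] at hU
  obtain ⟨I, u, h1, h2⟩ := hU t0 h
  refine ⟨(I.sup id) + 1, fun t ht => h2 ?_⟩
  intro i hi
  have : t i = t0 i := ht i (Nat.lt_succ_of_le (Finset.le_sup (f := id) hi))
  rw [this]; exact (h1 i hi).2

lemma cyl_isOpen (g : ℕ → Bool) (p : ℕ) : IsOpen {t : ℕ → Bool | ∀ i < p, t i = g i} := by
  have : {t : ℕ → Bool | ∀ i < p, t i = g i}
      = ⋂ i ∈ Finset.range p, (fun t : ℕ → Bool => t i) ⁻¹' {g i} := by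
    ext t; simp [Finset.mem_range]
  rw [this]
  exact isOpen_biInter_finset fun i _ =>
    (isOpen_discrete _).preimage (continuous_apply i)

lemma step_lemma {D : Set (ℕ → Bool)} (hDo : IsOpen D) (hDd : Dense D) (n : ℕ)
    (L : List (ℕ → Bool)) : ∃ (m : ℕ) (σ : ℕ → Bool), n ≤ m ∧ ∀ u ∈ L, ∀ t : ℕ → Bool,
      (∀ i < n, t i = u i) → (∀ i, n ≤ i → i < m → t i = σ i) → t ∈ D := by
  induction L with
  | nil => exact ⟨n, fun _ => false, le_rfl, by simp⟩
  | cons u L ih =>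
    obtain ⟨m, σ, hnm, hL⟩ := ih
    set q : ℕ → Bool := fun i => if i < n then u i else σ i with hq
    obtain ⟨t0, ht0D, ht0C⟩ := hDd.exists_mem_open (cyl_isOpen q m) ⟨q, fun _ _ => rfl⟩
    obtain ⟨p, hp⟩ := exists_cyl_subset hDo ht0D
    refine ⟨max m p, t0, le_trans hnm (le_max_left _ _), ?_⟩
    rintro v hv t htv htσ
    rcases List.mem_cons.mp hv with rfl | hvL
    · apply hp
      intro i hip
      by_cases hin : i < n
      · rw [htv i hin, ht0C i (lt_of_lt_of_le hin hnm)]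
        simp [hq, hin]
      · exact htσ i (le_of_not_gt hin) (lt_of_lt_of_le hip (le_max_right _ _))
    · refine hL v hvL t htv fun i hni him => ?_
      rw [htσ i hni (lt_of_lt_of_le him (le_max_left _ _)), ht0C i him]
      simp [hq, Nat.not_lt.mpr hni]

lemma block_lemma {D : Set (ℕ → Bool)} (hDo : IsOpen D) (hDd : Dense D) (n : ℕ) :
    ∃ (m : ℕ) (σ : ℕ → Bool), n < m ∧
      ∀ t : ℕ → Bool, (∀ i, n ≤ i → i < m → t i = σ i) → t ∈ D := by
  obtain ⟨m, σ, hnm, h⟩ := step_lemma hDo hDd n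
    ((Finset.univ : Finset (Fin n → Bool)).toList.map
      (fun v i => if h : i < n then v ⟨i, h⟩ else false))
  refine ⟨m + 1, σ, Nat.lt_succ_of_le hnm, fun t ht => ?_⟩
  refine h (fun i => if h : i < n then t i else false) ?_ t ?_ ?_
  · exact List.mem_map.mpr ⟨fun j => t j, Finset.mem_toList.mpr (Finset.mem_univ _), rfl⟩
  · intro i hi; simp [hi]
  · exact fun i hni him => ht i hni (Nat.lt_succ_of_lt him)

lemma blocks_of_meager {A : Set (ℕ → Bool)} (h : IsMeagre A) :
    ∃ (e : ℕ → ℕ) (σ : ℕ → (ℕ → Bool)), StrictMono e ∧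
      ∀ t : ℕ → Bool,
        (∀ k, ∃ j, k ≤ j ∧ ∀ i, e j ≤ i → i < e (j+1) → t i = σ j i) → t ∉ A := by
  rw [IsMeagre, mem_residual_iff] at h
  obtain ⟨S, hSo, hSd, hSc, hSs⟩ := h
  have hS'c : (insert (Set.univ : Set (ℕ → Bool)) S).Countable := hSc.insert _
  obtain ⟨D, hD⟩ := hS'c.exists_eq_range (Set.insert_nonempty _ _)
  have hDo : ∀ k, IsOpen (D k) := by
    intro k
    have : D k ∈ insert (Set.univ : Set (ℕ → Bool)) S := hD ▸ Set.mem_range_self k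
    rcases this with h | h
    · rw [h]; exact isOpen_univ
    · exact hSo _ h
  have hDd : ∀ k, Dense (D k) := by
    intro k
    have : D k ∈ insert (Set.univ : Set (ℕ → Bool)) S := hD ▸ Set.mem_range_self k
    rcases this with h | h
    · rw [h]; exact dense_univ
    · exact hSd _ h
  have key : ∀ n k : ℕ, ∃ (m : ℕ) (σ : ℕ → Bool), n < m ∧
      ∀ t : ℕ → Bool, (∀ i, n ≤ i → i < m → t i = σ i) → ∀ j ≤ k, t ∈ D j := by
    intro n k
    have ho : IsOpen (⋂ j ∈ Finset.range (k+1), D j) :=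
      isOpen_biInter_finset fun j _ => hDo j
    have hd : Dense (⋂ j ∈ Finset.range (k+1), D j) :=
      dense_biInter_of_isOpen (fun j _ => hDo j) (Set.to_countable _) (fun j _ => hDd j)
    obtain ⟨m, σ, hnm, hblk⟩ := block_lemma ho hd n
    refine ⟨m, σ, hnm, fun t ht j hj => ?_⟩
    have := hblk t ht
    simp only [Set.mem_iInter] at this
    exact this j (Finset.mem_range.mpr (Nat.lt_succ_of_le hj))
  choose m σf hm hforce using key
  set e : ℕ → ℕ := fun k => Nat.rec 0 (fun k ek => m ek k) k with he
  have he_succ : ∀ k, e (k+1) = m (e k) k := fun k => rfl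
  have hmono : StrictMono e := by
    apply strictMono_nat_of_lt_succ
    intro k
    rw [he_succ]; exact hm (e k) k
  refine ⟨e, fun k => σf (e k) k, hmono, ?_⟩
  intro t ht hA
  apply hSs
  · rintro u hu
    have : ∃ k, D k = u := by
      have : u ∈ insert (Set.univ : Set (ℕ → Bool)) S := Set.mem_insert_iff.mpr (Or.inr hu)
      rw [hD] at this; exact this
    obtain ⟨k, rfl⟩ := this
    obtain ⟨j, hkj, hmatch⟩ := ht k
    exact hforce (e j) j t (by rw [← he_succ]; exact hmatch) k hkj
  · exact hA

lemma ideal_meager (I : Set (Set ℕ))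
    (hUnion : ∀ A B : Set ℕ, A ∈ I → B ∈ I → A ∪ B ∈ I)
    (hSub : ∀ A B : Set ℕ, A ⊆ B → B ∈ I → A ∈ I)
    (hProper : (Set.univ : Set ℕ) ∉ I)
    (hFin : ∀ A : Set ℕ, A.Finite → A ∈ I)
    (hBP : BaireMeasurableSet {t : ℕ → Bool | {n : ℕ | t n = true} ∈ I}) :
    IsMeagre {t : ℕ → Bool | {n : ℕ | t n = true} ∈ I} := by
  set Ihat := {t : ℕ → Bool | {n : ℕ | t n = true} ∈ I} with hIhat
  obtain ⟨U, hUo, hUe⟩ := hBP.residualEq_isOpen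
  have hR : {t : ℕ → Bool | t ∈ Ihat ↔ t ∈ U} ∈ residual _ := by
    have := Filter.eventuallyEq_set.mp hUe
    exact this
  rcases Set.eq_empty_or_nonempty U with rfl | ⟨t0, ht0⟩
  · rw [IsMeagre]
    apply Filter.mem_of_superset hR
    intro t ht
    simp only [Set.mem_setOf_eq, Set.mem_empty_iff_false, iff_false] at ht
    exact ht
  · exfalso
    obtain ⟨p, hp⟩ := exists_cyl_subset hUo ht0
    set f : (ℕ → Bool) → (ℕ → Bool) := fun t i => if i < p then t i else !(t i) with hf
    have hinv : Function.Involutive f := by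
      intro t; funext i
      by_cases h : i < p <;> simp [hf, h]
    have hcont : Continuous f := by
      apply continuous_pi
      intro i
      exact (continuous_of_discreteTopology (f := fun b : Bool => if i < p then b else !b)).comp
        (continuous_apply i)
    let homeo : Homeomorph (ℕ → Bool) (ℕ → Bool) := ⟨hinv.toPerm, hcont, hcont⟩
    have hR2 : f ⁻¹' {t : ℕ → Bool | t ∈ Ihat ↔ t ∈ U} ∈ residual _ := by
      have := homeo.residual_map_eq
      rw [← this] at hR
      have h2 := mem_map.mp hR
      exact h2
    have hdense : Dense ({t : ℕ → Bool | t ∈ Ihat ↔ t ∈ U} ∩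
        f ⁻¹' {t : ℕ → Bool | t ∈ Ihat ↔ t ∈ U}) :=
      dense_of_mem_residual (inter_mem hR hR2)
    obtain ⟨t, ⟨ht1, ht2⟩, htC⟩ := hdense.exists_mem_open (cyl_isOpen t0 p) ⟨t0, fun i _ => rfl⟩
    have htU : t ∈ U := hp t htC
    have htIhat : t ∈ Ihat := ht1.mpr htU
    have hftC : ∀ i < p, f t i = t0 i := by
      intro i hi; simp only [hf, if_pos hi]; exact htC i hi
    have hftU : f t ∈ U := hp (f t) hftC
    have hftIhat : f t ∈ Ihat := ht2.mpr hftU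
    apply hProper
    have : (Set.univ : Set ℕ) ⊆ ({n | t n = true} ∪ {n | f t n = true}) ∪ {n | n < p} := by
      intro n _
      by_cases hn : n < p
      · exact Or.inr hn
      · rcases Bool.eq_false_or_eq_true (t n) with h | h
        · exact Or.inl (Or.inl h)
        · left; right
          simp only [Set.mem_setOf_eq, hf, if_neg hn, h, Bool.not_false]
    exact hSub _ _ this (hUnion _ _ (hUnion _ _ htIhat hftIhat) (hFin _ (Set.finite_Iio p)))

end CantorHelpers

/-- An ideal `I` on `ℕ` has the Baire property if the corresponding set of
characteristic functions is Baire measurable in the Cantor space `ℕ → Bool`. -/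
def IdealHasBaireProperty (I : Set (Set ℕ)) : Prop :=
  BaireMeasurableSet {t : ℕ → Bool | {n : ℕ | t n = true} ∈ I}

theorem A_ideal_meager
    {X : Type*} [NormedAddCommGroup X] [NormedSpace ℝ X] [CompleteSpace X]
    (x : ℕ → X)
    (I : Set (Set ℕ))
    (hEmpty : ∅ ∈ I)
    (hUnion : ∀ A B : Set ℕ, A ∈ I → B ∈ I → A ∪ B ∈ I)
    (hSub : ∀ A B : Set ℕ, A ⊆ B → B ∈ I → A ∈ I)
    (hProper : (Set.univ : Set ℕ) ∉ I)
    (hFin : ∀ A : Set ℕ, A.Finite → A ∈ I)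
    (hBP : IdealHasBaireProperty I)
    (t' : ℕ → Bool)
    (hub : ¬ ∃ M : ℝ, ∀ n : ℕ, ‖∑ i ∈ Finset.range n, if t' i then x i else 0‖ ≤ M) :
    IsMeagre {t : ℕ → Bool | ∃ M > (0 : ℝ),
      {n : ℕ | M < ‖∑ i ∈ Finset.range n, if t i then x i else 0‖} ∈ I} := by
  classical
  push_neg at hub
  set S : (ℕ → Bool) → ℕ → X := fun t n => ∑ i ∈ Finset.range n, if t i then x i else 0 with hS
  have hScongr : ∀ (a b : ℕ → Bool) (n : ℕ), (∀ i < n, a i = b i) → S a n = S b n := by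
    intro a b n h
    exact Finset.sum_congr rfl fun i hi => by rw [h i (Finset.mem_range.mp hi)]
  obtain ⟨e, σ, hmono, hblocks⟩ :=
    blocks_of_meager (ideal_meager I hUnion hSub hProper hFin hBP)
  -- no member of I contains infinitely many blocks
  have hIfin : ∀ E ∈ I, {j : ℕ | ∀ n, e j ≤ n → n < e (j+1) → n ∈ E}.Finite := by
    intro E hE
    by_contra hinf
    replace hinf : {j : ℕ | ∀ n, e j ≤ n → n < e (j+1) → n ∈ E}.Infinite := hinf
    set F := {j : ℕ | ∀ n, e j ≤ n → n < e (j+1) → n ∈ E} with hF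
    set w : ℕ → Bool := fun i => decide (∃ j ∈ F, e j ≤ i ∧ i < e (j+1) ∧ σ j i = true) with hw
    have hdisj : ∀ {j j' i : ℕ}, e j ≤ i → i < e (j+1) → e j' ≤ i → i < e (j'+1) → j = j' := by
      intro j j' i h1 h2 h3 h4
      rcases lt_trichotomy j j' with h | h | h
      · exact absurd (le_trans (hmono.monotone (Nat.succ_le_of_lt h)) h3) (not_le.mpr h2)
      · exact h
      · exact absurd (le_trans (hmono.monotone (Nat.succ_le_of_lt h)) h1) (not_le.mpr h4)
    have hwsupp : {n | w n = true} ∈ I := by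
      apply hSub _ E _ hE
      intro n hn
      simp only [Set.mem_setOf_eq, hw, decide_eq_true_eq] at hn
      obtain ⟨j, hjF, h1, h2, _⟩ := hn
      exact hjF n h1 h2
    have hmatch : ∀ j ∈ F, ∀ i, e j ≤ i → i < e (j+1) → w i = σ j i := by
      intro j hj i h1 h2
      by_cases hb : σ j i = true
      · rw [hb]
        simp only [hw, decide_eq_true_eq]
        exact ⟨j, hj, h1, h2, hb⟩
      · rw [Bool.not_eq_true] at hb
        rw [hb]
        simp only [hw, decide_eq_false_iff_not]
        rintro ⟨j', hj', h1', h2', hb'⟩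
        rw [hdisj h1 h2 h1' h2'] at hb
        rw [hb'] at hb
        exact Bool.noConfusion hb
    have hnotin : w ∉ {t : ℕ → Bool | {n | t n = true} ∈ I} := by
      apply hblocks
      intro k
      obtain ⟨j, hjF, hjk⟩ := hinf.exists_gt k
      exact ⟨j, le_of_lt hjk, fun i h1 h2 => hmatch j hjF i h1 h2⟩
    exact hnotin hwsupp
  set B : ℕ → ℕ → Set (ℕ → Bool) := fun N k =>
    {t | ∀ j, k ≤ j → ∃ n, e j ≤ n ∧ n < e (j+1) ∧ ‖S t n‖ ≤ (N : ℝ)} with hB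
  have hcover : {t : ℕ → Bool | ∃ M > (0 : ℝ),
      {n : ℕ | M < ‖∑ i ∈ Finset.range n, if t i then x i else 0‖} ∈ I}
      ⊆ ⋃ (N : ℕ) (k : ℕ), B N k := by
    rintro t ⟨M, hM0, hMI⟩
    set N := ⌈M⌉₊ with hN
    have hME : {n | (N:ℝ) < ‖S t n‖} ∈ I := by
      apply hSub _ _ _ hMI
      intro n hn
      exact lt_of_le_of_lt (Nat.le_ceil M) hn
    obtain ⟨k, hk⟩ := (hIfin _ hME).bddAbove
    refine Set.mem_iUnion.mpr ⟨N, Set.mem_iUnion.mpr ⟨k+1, ?_⟩⟩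
    intro j hj
    have hjnot : ¬ ∀ n, e j ≤ n → n < e (j+1) → n ∈ {n | (N:ℝ) < ‖S t n‖} := by
      intro hmem
      exact absurd (hk hmem) (not_le.mpr (Nat.lt_of_succ_le hj))
    push_neg at hjnot
    obtain ⟨n, h1, h2, h3⟩ := hjnot
    exact ⟨n, h1, h2, not_lt.mp h3⟩
  have hnwd : ∀ N k : ℕ, IsNowhereDense (B N k) := by
    intro N k
    rw [IsNowhereDense, Set.eq_empty_iff_forall_notMem]
    intro t0 ht0
    obtain ⟨p, hp⟩ := exists_cyl_subset isOpen_interior ht0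
    set R : ℝ := ∑ n ∈ Finset.range (p+1), ‖S t' n‖ with hR
    have hRb : ∀ n ≤ p, ‖S t' n‖ ≤ R := by
      intro n hn
      exact Finset.single_le_sum (f := fun n => ‖S t' n‖) (fun i _ => norm_nonneg _)
        (Finset.mem_range.mpr (Nat.lt_succ_of_le hn))
    set c : X := S (fun i => if i < p then t0 i else false) p - S t' p with hc
    obtain ⟨n', hn'⟩ := hub (max R ((N:ℝ) + ‖c‖))
    have hpn' : p < n' := by
      by_contra hle
      exact absurd (lt_of_le_of_lt (le_max_left _ _) hn') (not_lt.mpr (hRb n' (le_of_not_gt hle)))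
    set s : ℕ → Bool := fun i => if i < p then t0 i else if i < n' then t' i else false with hs
    have hsp : S s p = S (fun i => if i < p then t0 i else false) p :=
      hScongr _ _ _ (fun i hi => by simp [hs, hi])
    have hsum1 : ∀ n, n' ≤ n → S s n = S s n' := by
      intro n hn
      refine (Finset.sum_subset (Finset.range_subset_range.mpr hn) ?_).symm
      intro i hi hni
      have h1 : ¬ i < n' := fun h => hni (Finset.mem_range.mpr h)
      have h2 : ¬ i < p := fun h => h1 (lt_trans h hpn')
      simp [hs, h1, h2]
    have hsum2 : S s n' = S t' n' + c := by
      have e1 : S s p + ∑ i ∈ Finset.Ico p n', (if s i then x i else 0) = S s n' :=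
        Finset.sum_range_add_sum_Ico _ (le_of_lt hpn')
      have e2 : S t' p + ∑ i ∈ Finset.Ico p n', (if t' i then x i else 0) = S t' n' :=
        Finset.sum_range_add_sum_Ico _ (le_of_lt hpn')
      have e3 : ∑ i ∈ Finset.Ico p n', (if s i then x i else 0)
          = ∑ i ∈ Finset.Ico p n', (if t' i then x i else 0) := by
        refine Finset.sum_congr rfl fun i hi => ?_
        obtain ⟨hip, hin⟩ := Finset.mem_Ico.mp hi
        have : s i = t' i := by simp [hs, Nat.not_lt.mpr hip, hin]
        rw [this]
      have e4 : c = S s p - S t' p := by rw [hc, hsp]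
      rw [← e1, ← e2, e3, e4]; abel
    have hbig : (N:ℝ) < ‖S s n'‖ := by
      have h1 : ‖S t' n'‖ ≤ ‖S s n'‖ + ‖c‖ := by
        have : S t' n' = S s n' - c := by rw [hsum2]; abel
        rw [this]; exact norm_sub_le _ _
      have h2 : (N:ℝ) + ‖c‖ < ‖S t' n'‖ := lt_of_le_of_lt (le_max_right _ _) hn'
      linarith
    set j := max k n' with hj
    have hsC : s ∈ interior (closure (B N k)) :=
      hp s (fun i hi => by simp [hs, hi])
    have hsB : s ∈ closure (B N k) := interior_subset hsC
    rw [mem_closure_iff] at hsB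
    obtain ⟨u, huW, huB⟩ := hsB {u | ∀ i < e (j+1), u i = s i} (cyl_isOpen s (e (j+1)))
      (fun i _ => rfl)
    obtain ⟨n, hn1, hn2, hn3⟩ := huB j (le_max_left _ _)
    have hnn' : n' ≤ n := le_trans (le_trans (le_max_right k n') hmono.le_apply) hn1
    have : S u n = S s n := hScongr _ _ _ (fun i hi => huW i (lt_trans hi hn2))
    rw [this, hsum1 n hnn'] at hn3
    exact absurd hn3 (not_le.mpr hbig)
  apply IsMeagre.mono hcover
  apply isMeagre_iUnion
  intro N
  apply isMeagre_iUnion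
  intro k
  rw [isMeagre_iff_countable_union_isNowhereDense]
  exact ⟨{B N k}, by simpa using hnwd N k, Set.countable_singleton _, by simp⟩
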